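/- arXiv:1001.3486 — 2 statements merged into one kernel-verified Lean document; each statement's English description precedes it below -/
import Mathlib

section
/- Let 𝒴 and 𝒳 be finite alphabets, P_Y a probability mass function on 𝒴, and d: 𝒳×𝒴 → [0, d_max] a bounded distortion measure. Define the rate-distortion function R(D) as the infimum of I(X;Y) = Σ_{x,y} P_Y(y) W(x|y) log₂( W(x|y) / Σ_{y'} P_Y(y') W(x|y') ) over all conditional probability mass functions W(·|·) from 𝒴 to 𝒳 satisfying Σ_{x,y} P_Y(y) W(x|y) d(x,y) ≤ D. Then for every D such that some conditional pmf W achieves expected distortion at most D, and for every δ > 0 and ε > 0, there exist n ≥ 1, a natural number M ≤ 2^{n(R(D)+δ)}, an encoding function e: 𝒴^n → {1,…,M}, and decoding functions f_k: {1,…,M} × 𝒴^{k−1} → 𝒳 for k = 1,…,n, such that when Y_1,…,Y_n are i.i.d. with distribution P_Y, the time-averaged expected distortion satisfies n^{-1} Σ_{k=1}^n E[ d( f_k( e(Y_1,…,Y_n), (Y_1,…,Y_{k−1}) ), Y_k ) ] ≤ D + ε. -/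
open Finset

lemma aux_sum_prod {ι α : Type*} [Fintype ι] [DecidableEq ι] [Fintype α] (g : ι → α → ℝ) :
    ∑ a : ι → α, ∏ i, g i (a i) = ∏ i, ∑ x, g i x := by
  rw [Finset.prod_univ_sum, Fintype.piFinset_univ]

lemma aux_prod_ind {ι : Type*} [Fintype ι] (p : ι → Prop) [DecidablePred p] [Decidable (∀ i, p i)] :
    ∏ i, (if p i then (1:ℝ) else 0) = if ∀ i, p i then 1 else 0 := by
  by_cases h : ∀ i, p i
  · rw [if_pos h]
    rw [Finset.prod_eq_one fun i _ => if_pos (h i)]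
  · rw [if_neg h]
    push_neg at h
    obtain ⟨i, hi⟩ := h
    exact Finset.prod_eq_zero (Finset.mem_univ i) (if_neg hi)

lemma aux_cheb {α : Type*} [Fintype α] (n : ℕ) (hn : 0 < n)
    (μ f : Fin n → α → ℝ) (hμ0 : ∀ k x, 0 ≤ μ k x) (hμ1 : ∀ k, ∑ x, μ k x = 1)
    (c t : ℝ) (ht : 0 < t)
    (hc : ∀ k x, |f k x - ∑ z, μ k z * f k z| ≤ c) :
    ∑ a : Fin n → α, (∏ k, μ k (a k)) *
        (if (∑ k, ∑ z, μ k z * f k z) + n * t ≤ ∑ k, f k (a k) then (1:ℝ) else 0)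
      ≤ c ^ 2 / (n * t ^ 2) := by
  classical
  set m : Fin n → ℝ := fun k => ∑ z, μ k z * f k z with hm
  have hc0 : 0 ≤ c := by
    rcases isEmpty_or_nonempty α with h | h
    · exfalso; have := hμ1 ⟨0, hn⟩; simp at this
    · exact le_trans (abs_nonneg _) (hc ⟨0, hn⟩ (Classical.arbitrary α))
  have hnt : (0:ℝ) < (n:ℝ) * t := by positivity
  have hpoint : ∀ a : Fin n → α,
      (if (∑ k, m k) + n * t ≤ ∑ k, f k (a k) then (1:ℝ) else 0)
        ≤ ((∑ k, (f k (a k) - m k)) / ((n:ℝ) * t)) ^ 2 := by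
    intro a
    split_ifs with h
    · have h1 : (n:ℝ) * t ≤ ∑ k, (f k (a k) - m k) := by
        rw [Finset.sum_sub_distrib]; linarith
      have h2 : (1:ℝ) ≤ (∑ k, (f k (a k) - m k)) / ((n:ℝ) * t) :=
        (one_le_div hnt).2 h1
      nlinarith
    · positivity
  have hμprod : ∀ a : Fin n → α, (0:ℝ) ≤ ∏ k, μ k (a k) := fun a =>
    Finset.prod_nonneg fun k _ => hμ0 k (a k)
  calc ∑ a : Fin n → α, (∏ k, μ k (a k)) *
        (if (∑ k, m k) + n * t ≤ ∑ k, f k (a k) then (1:ℝ) else 0)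
      ≤ ∑ a : Fin n → α, (∏ k, μ k (a k)) *
          (((∑ k, (f k (a k) - m k)) / ((n:ℝ) * t)) ^ 2) := by
        exact Finset.sum_le_sum fun a _ => mul_le_mul_of_nonneg_left (hpoint a) (hμprod a)
    _ = (∑ a : Fin n → α, (∏ k, μ k (a k)) * (∑ k, (f k (a k) - m k)) ^ 2) / ((n:ℝ)*t)^2 := by
        rw [Finset.sum_div]; congr 1; ext a; rw [div_pow, mul_div_assoc]
    _ ≤ ((n:ℝ) * c ^ 2) / ((n:ℝ)*t)^2 := by
        apply div_le_div_of_nonneg_right ?_ (by positivity)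
        have expand : ∀ a : Fin n → α, (∑ k, (f k (a k) - m k)) ^ 2
            = ∑ j, ∑ k, (f j (a j) - m j) * (f k (a k) - m k) := by
          intro a; rw [sq, Finset.sum_mul_sum]
        have swap : ∑ a : Fin n → α, (∏ k, μ k (a k)) * (∑ k, (f k (a k) - m k)) ^ 2
            = ∑ j, ∑ k, ∑ a : Fin n → α,
                (∏ i, μ i (a i)) * ((f j (a j) - m j) * (f k (a k) - m k)) := by
          simp_rw [expand, Finset.mul_sum]
          rw [Finset.sum_comm]
          congr 1; ext j
          rw [Finset.sum_comm]
        rw [swap]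
        have key : ∀ j k : Fin n,
            ∑ a : Fin n → α, (∏ i, μ i (a i)) * ((f j (a j) - m j) * (f k (a k) - m k))
            = ∏ i, ∑ x, μ i x * (((if i = j then f j x - m j else 1)) *
                ((if i = k then f k x - m k else 1))) := by
          intro j k
          rw [← aux_sum_prod (fun i x => μ i x * ((if i = j then f j x - m j else 1) *
            (if i = k then f k x - m k else 1)))]
          apply Finset.sum_congr rfl
          intro a _
          rw [Finset.prod_mul_distrib]
          congr 1
          rw [Finset.prod_mul_distrib]
          congr 1
          · simp
          · simp
        have zero_off : ∀ j k : Fin n, j ≠ k →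
            ∑ a : Fin n → α, (∏ i, μ i (a i)) * ((f j (a j) - m j) * (f k (a k) - m k)) = 0 := by
          intro j k hjk
          rw [key j k]
          apply Finset.prod_eq_zero (Finset.mem_univ j)
          simp only [eq_self_iff_true, if_true, if_neg hjk, mul_one, mul_sub]
          rw [Finset.sum_sub_distrib, ← Finset.sum_mul, hμ1 j]
          simp [hm]
        have diag : ∀ j : Fin n,
            ∑ a : Fin n → α, (∏ i, μ i (a i)) * ((f j (a j) - m j) * (f j (a j) - m j))
              ≤ c ^ 2 := by
          intro j
          rw [key j j]
          have hfac : ∀ i : Fin n, i ≠ j → (∑ x, μ i x * (((if i = j then f j x - m j else 1)) *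
                ((if i = j then f j x - m j else 1)))) = 1 := by
            intro i hij
            simp only [if_neg hij, mul_one]
            exact hμ1 i
          rw [Finset.prod_eq_single j (fun i _ hij => hfac i hij) (by simp)]
          simp only [eq_self_iff_true, if_true]
          calc ∑ x, μ j x * ((f j x - m j) * (f j x - m j))
              ≤ ∑ x, μ j x * c ^ 2 := by
                apply Finset.sum_le_sum
                intro x _
                apply mul_le_mul_of_nonneg_left ?_ (hμ0 j x)
                rw [← sq]
                exact sq_le_sq' (by linarith [abs_le.1 (hc j x)]) (le_of_abs_le (hc j x))
            _ = c ^ 2 := by rw [← Finset.sum_mul, hμ1 j, one_mul]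
        calc ∑ j, ∑ k, ∑ a : Fin n → α,
                (∏ i, μ i (a i)) * ((f j (a j) - m j) * (f k (a k) - m k))
            = ∑ j : Fin n, ∑ a : Fin n → α,
                (∏ i, μ i (a i)) * ((f j (a j) - m j) * (f j (a j) - m j)) := by
              apply Finset.sum_congr rfl
              intro j _
              exact Finset.sum_eq_single j (fun k _ hkj => zero_off j k (Ne.symm hkj))
                (by simp)
          _ ≤ ∑ _j : Fin n, c ^ 2 := Finset.sum_le_sum fun j _ => diag j
          _ = (n:ℝ) * c ^ 2 := by simp [mul_comm]
    _ = c ^ 2 / ((n:ℝ) * t ^ 2) := by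
        rw [mul_pow]
        rw [div_eq_div_iff (by positivity) (by positivity)]
        ring

lemma aux_gibbs {𝒳 𝒴 : Type*} [Fintype 𝒳] [Fintype 𝒴]
    (PY : 𝒴 → ℝ) (hPY0 : ∀ y, 0 ≤ PY y) (hPY1 : ∑ y, PY y = 1)
    (W : 𝒳 → 𝒴 → ℝ) (hW0 : ∀ x y, 0 ≤ W x y) (hW1 : ∀ y, ∑ x, W x y = 1) :
    0 ≤ ∑ y, ∑ x, PY y * W x y * Real.logb 2 (W x y / (∑ y', PY y' * W x y')) := by
  classical
  set PX : 𝒳 → ℝ := fun x => ∑ y', PY y' * W x y' with hPX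
  have hPX0 : ∀ x, 0 ≤ PX x := fun x =>
    Finset.sum_nonneg fun y _ => mul_nonneg (hPY0 y) (hW0 x y)
  have hPX1 : ∑ x, PX x = 1 := by
    rw [hPX]
    rw [Finset.sum_comm]
    calc ∑ y, ∑ x, PY y * W x y = ∑ y, PY y * ∑ x, W x y := by
          simp_rw [Finset.mul_sum]
      _ = 1 := by simp_rw [hW1]; simpa using hPY1
  have hlog2 : (0:ℝ) < Real.log 2 := Real.log_pos (by norm_num)
  have point : ∀ y x, (PY y * W x y - PY y * PX x) / Real.log 2
      ≤ PY y * W x y * Real.logb 2 (W x y / PX x) := by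
    intro y x
    rcases eq_or_lt_of_le (mul_nonneg (hPY0 y) (hW0 x y)) with h0 | hpos
    · rw [← h0]
      have : (0 - PY y * PX x) / Real.log 2 ≤ 0 := by
        apply div_nonpos_of_nonpos_of_nonneg ?_ hlog2.le
        have := mul_nonneg (hPY0 y) (hPX0 x); linarith
      simpa using this
    · have hPYy : 0 < PY y := by
        rcases (hPY0 y).lt_or_eq with h | h
        · exact h
        · exfalso; rw [← h] at hpos; simp at hpos
      have hWxy : 0 < W x y := by
        rcases (hW0 x y).lt_or_eq with h | h
        · exact h
        · exfalso; rw [← h] at hpos; simp at hpos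
      have hPXx : 0 < PX x := by
        have hle : PY y * W x y ≤ PX x := by
          apply Finset.single_le_sum (f := fun y' => PY y' * W x y')
            (fun y' _ => mul_nonneg (hPY0 y') (hW0 x y')) (Finset.mem_univ y)
        linarith
      have hlb : 1 - PX x / W x y ≤ Real.log (W x y / PX x) := by
        have h1 : Real.log (PX x / W x y) ≤ PX x / W x y - 1 :=
          Real.log_le_sub_one_of_pos (by positivity)
        have h2 : Real.log (W x y / PX x) = - Real.log (PX x / W x y) := by
          rw [Real.log_div hWxy.ne' hPXx.ne', Real.log_div hPXx.ne' hWxy.ne']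
          ring
        linarith
      rw [Real.logb, ← mul_div_assoc]
      apply (div_le_div_iff_of_pos_right hlog2).2
      have := mul_le_mul_of_nonneg_left hlb hpos.le
      have heq : PY y * W x y * (1 - PX x / W x y) = PY y * W x y - PY y * PX x := by
        field_simp
      linarith [heq ▸ this]
  calc (0:ℝ) = ∑ y, ∑ x, (PY y * W x y - PY y * PX x) / Real.log 2 := by
        simp_rw [← Finset.sum_div, Finset.sum_sub_distrib]
        have e1 : ∑ y, ∑ x, PY y * W x y = 1 := by
          simp_rw [← Finset.mul_sum, hW1]; simpa using hPY1
        have e2 : ∑ y, ∑ x, PY y * PX x = 1 := by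
          simp_rw [← Finset.mul_sum, hPX1]; simpa using hPY1
        rw [e1, e2]
        simp
    _ ≤ ∑ y, ∑ x, PY y * W x y * Real.logb 2 (W x y / PX x) :=
        Finset.sum_le_sum fun y _ => Finset.sum_le_sum fun x _ => point y x


set_option maxHeartbeats 2000000 in
/-- **Main theorem of the paper.**  For a discrete memoryless source `PY` over a finite alphabet
`𝒴`, a bounded distortion measure `d : 𝒳 × 𝒴 → [0, dmax]`, and any distortion level `D`
achievable by some test channel, source coding with feedforward can operate arbitrarily close
to the rate-distortion function `R(D)`: for every `δ, ε > 0` there are a block length `n`, an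
index set of size `M ≤ 2^{n (R(D)+δ)}`, an encoder `e : 𝒴^n → {1,…,M}` and decoders
`f k : {1,…,M} × 𝒴^{k-1} → 𝒳` (the decoder of symbol `k` sees the past source symbols via
feedforward) whose time-averaged expected distortion on an i.i.d.-`PY` block is at most
`D + ε`. -/
theorem stmt_14 {𝒳 𝒴 : Type*} [Fintype 𝒳] [Fintype 𝒴]
    (PY : 𝒴 → ℝ) (hPY0 : ∀ y, 0 ≤ PY y) (hPY1 : ∑ y, PY y = 1)
    (dmax : ℝ) (d : 𝒳 → 𝒴 → ℝ) (hd : ∀ x y, d x y ∈ Set.Icc 0 dmax)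
    (D : ℝ)
    (RD : ℝ)
    (hRD : RD = sInf {r : ℝ | ∃ W : 𝒳 → 𝒴 → ℝ,
      (∀ x y, 0 ≤ W x y) ∧ (∀ y, ∑ x, W x y = 1) ∧
      (∑ y, ∑ x, PY y * W x y * d x y ≤ D) ∧
      r = ∑ y, ∑ x, PY y * W x y * Real.logb 2 (W x y / (∑ y', PY y' * W x y'))})
    (hD : ∃ W : 𝒳 → 𝒴 → ℝ, (∀ x y, 0 ≤ W x y) ∧ (∀ y, ∑ x, W x y = 1) ∧
      ∑ y, ∑ x, PY y * W x y * d x y ≤ D)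
    (δ ε : ℝ) (hδ : 0 < δ) (hε : 0 < ε) :
    ∃ n : ℕ, 1 ≤ n ∧ ∃ (M : ℕ) (e : (Fin n → 𝒴) → Fin M)
      (f : (k : Fin n) → Fin M → (Fin (k : ℕ) → 𝒴) → 𝒳),
      (M : ℝ) ≤ 2 ^ ((n : ℝ) * (RD + δ)) ∧
      ∑ y : Fin n → 𝒴, (∏ k, PY (y k)) *
          ((n : ℝ)⁻¹ * ∑ k : Fin n,
            d (f k (e y) (fun l : Fin (k : ℕ) => y ⟨l, l.isLt.trans k.isLt⟩)) (y k))
        ≤ D + ε := by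
  classical
  -- nonemptiness
  have hY : Nonempty 𝒴 := by
    by_contra h
    rw [not_nonempty_iff] at h
    rw [Finset.univ_eq_empty, Finset.sum_empty] at hPY1
    norm_num at hPY1
  obtain ⟨W₀, hW₀0, hW₀1, hW₀d⟩ := hD
  have hX : Nonempty 𝒳 := by
    by_contra h
    rw [not_nonempty_iff] at h
    have := hW₀1 (Classical.arbitrary 𝒴)
    rw [Finset.univ_eq_empty, Finset.sum_empty] at this
    norm_num at this
  have hdmax0 : 0 ≤ dmax := le_trans (hd (Classical.arbitrary 𝒳) (Classical.arbitrary 𝒴)).1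
    (hd _ _).2
  have hD0 : 0 ≤ D := le_trans (Finset.sum_nonneg fun y _ => Finset.sum_nonneg fun x _ =>
    mul_nonneg (mul_nonneg (hPY0 y) (hW₀0 x y)) (hd x y).1) hW₀d
  -- pick a near-optimal channel W
  set S : Set ℝ := {r : ℝ | ∃ W : 𝒳 → 𝒴 → ℝ,
      (∀ x y, 0 ≤ W x y) ∧ (∀ y, ∑ x, W x y = 1) ∧
      (∑ y, ∑ x, PY y * W x y * d x y ≤ D) ∧
      r = ∑ y, ∑ x, PY y * W x y * Real.logb 2 (W x y / (∑ y', PY y' * W x y'))} with hS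
  have hSne : S.Nonempty := ⟨_, ⟨W₀, hW₀0, hW₀1, hW₀d, rfl⟩⟩
  have hlt : sInf S < RD + δ / 2 := by rw [← hRD]; linarith
  obtain ⟨r, hrS, hrlt⟩ := exists_lt_of_csInf_lt hSne hlt
  obtain ⟨W, hW0, hW1, hWd, hrW⟩ := hrS
  -- definitions
  set PX : 𝒳 → ℝ := fun x => ∑ y', PY y' * W x y' with hPXdef
  set lam : 𝒳 → 𝒴 → ℝ := fun x y => Real.logb 2 (W x y / PX x) with hlamdef
  set iot : 𝒴 → ℝ := fun y => ∑ x, W x y * lam x y with hiotdef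
  set db : 𝒴 → ℝ := fun y => ∑ x, W x y * d x y with hdbdef
  set Iw : ℝ := ∑ y, PY y * iot y with hIwdef
  set Dm : ℝ := ∑ y, PY y * db y with hDmdef
  set Bl : ℝ := ∑ x, ∑ y, |lam x y| with hBldef
  set K : ℝ := (2*Bl)^2/((δ/8)^2) + dmax^2/((ε/4)^2) with hKdef
  have hPX0 : ∀ x, 0 ≤ PX x := fun x =>
    Finset.sum_nonneg fun y _ => mul_nonneg (hPY0 y) (hW0 x y)
  have hPX1 : ∑ x, PX x = 1 := by
    simp only [hPXdef]
    rw [Finset.sum_comm]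
    simp_rw [← Finset.mul_sum, hW1, mul_one]
    exact hPY1
  have hIwr : Iw = r := by
    rw [hIwdef, hrW]
    apply Finset.sum_congr rfl; intro y _
    simp only [hiotdef, hlamdef, hPXdef]
    rw [Finset.mul_sum]
    apply Finset.sum_congr rfl; intro x _
    ring
  have hIw0 : 0 ≤ Iw := by
    rw [hIwr, hrW]
    exact aux_gibbs PY hPY0 hPY1 W hW0 hW1
  have hIwlt : Iw < RD + δ/2 := by rw [hIwr]; exact hrlt
  have hBl0 : 0 ≤ Bl := Finset.sum_nonneg fun x _ => Finset.sum_nonneg fun y _ => abs_nonneg _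
  have hlamB : ∀ x y, |lam x y| ≤ Bl := by
    intro x y
    rw [hBldef]
    calc |lam x y| ≤ ∑ y', |lam x y'| :=
          Finset.single_le_sum (f := fun y' => |lam x y'|) (fun _ _ => abs_nonneg _)
            (Finset.mem_univ y)
      _ ≤ ∑ x', ∑ y', |lam x' y'| :=
          Finset.single_le_sum (f := fun x' => ∑ y', |lam x' y'|)
            (fun _ _ => Finset.sum_nonneg fun _ _ => abs_nonneg _) (Finset.mem_univ x)
  have hiotB : ∀ y, |iot y| ≤ Bl := by
    intro y
    simp only [hiotdef]
    calc |∑ x, W x y * lam x y| ≤ ∑ x, |W x y * lam x y| := Finset.abs_sum_le_sum_abs _ _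
      _ ≤ ∑ x, W x y * Bl := Finset.sum_le_sum fun x _ => by
          rw [abs_mul, abs_of_nonneg (hW0 x y)]
          exact mul_le_mul_of_nonneg_left (hlamB x y) (hW0 x y)
      _ = Bl := by rw [← Finset.sum_mul, hW1, one_mul]
  have hIwB : |Iw| ≤ Bl := by
    rw [hIwdef]
    calc |∑ y, PY y * iot y| ≤ ∑ y, |PY y * iot y| := Finset.abs_sum_le_sum_abs _ _
      _ ≤ ∑ y, PY y * Bl := Finset.sum_le_sum fun y _ => by
          rw [abs_mul, abs_of_nonneg (hPY0 y)]
          exact mul_le_mul_of_nonneg_left (hiotB y) (hPY0 y)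
      _ = Bl := by rw [← Finset.sum_mul, hPY1, one_mul]
  have hdb : ∀ y, db y ∈ Set.Icc 0 dmax := by
    intro y
    constructor
    · exact Finset.sum_nonneg fun x _ => mul_nonneg (hW0 x y) (hd x y).1
    · calc ∑ x, W x y * d x y ≤ ∑ x, W x y * dmax := Finset.sum_le_sum fun x _ =>
            mul_le_mul_of_nonneg_left (hd x y).2 (hW0 x y)
        _ = dmax := by rw [← Finset.sum_mul, hW1, one_mul]
  have hDm0 : 0 ≤ Dm := Finset.sum_nonneg fun y _ => mul_nonneg (hPY0 y) (hdb y).1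
  have hDmD : Dm ≤ D := by
    rw [hDmdef]
    simp only [hdbdef, Finset.mul_sum]
    simp_rw [← mul_assoc]
    exact hWd
  have hK0 : 0 ≤ K := by positivity
  have hlog2 : (0:ℝ) < Real.log 2 := Real.log_pos (by norm_num)
  -- choose n
  set g : ℝ := RD + δ - (Iw + δ/2) with hgdef
  have hg : 0 < g := by simp only [hgdef]; linarith
  obtain ⟨n, hnN⟩ := exists_nat_ge (max (max (1:ℝ) (1/g))
    (max (2*K + 1) (max (8/δ) ((dmax+1)*(8/(δ*Real.log 2) + K)/(ε/2) + 1))))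
  have hn1 : (1:ℝ) ≤ n := le_trans (le_max_of_le_left (le_max_left _ _)) hnN
  have hn1' : 1 ≤ n := by exact_mod_cast hn1
  have hn0 : 0 < n := hn1'
  have hn0R : (0:ℝ) < n := by exact_mod_cast hn0
  have hng : 1 ≤ (n:ℝ) * g := by
    have : 1/g ≤ n := le_trans (le_max_of_le_left (le_max_right _ _)) hnN
    rw [div_le_iff₀ hg] at this
    nlinarith [mul_le_mul_of_nonneg_right this hg.le]
  have hnK : K / n ≤ 1/2 := by
    have : 2*K + 1 ≤ n := le_trans (le_max_of_le_right (le_max_left _ _)) hnN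
    rw [div_le_iff₀ hn0R]
    clear_value K
    linarith
  have hnδ : 8/δ ≤ n := le_trans (le_max_of_le_right (le_max_of_le_right (le_max_left _ _))) hnN
  have hnfin : (dmax+1)*(8/(δ*Real.log 2) + K)/(ε/2) + 1 ≤ n :=
    le_trans (le_max_of_le_right (le_max_of_le_right (le_max_right _ _))) hnN
  -- the number of codewords
  set M : ℕ := ⌈(2:ℝ) ^ ((n:ℝ) * (Iw + δ/2))⌉₊ with hMdef
  have hMpos : 0 < M := Nat.ceil_pos.2 (Real.rpow_pos_of_pos two_pos _)
  have hMlb : (2:ℝ) ^ ((n:ℝ) * (Iw + δ/2)) ≤ M := Nat.le_ceil _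
  have hMub : (M : ℝ) ≤ 2 ^ ((n:ℝ) * (RD + δ)) := by
    clear_value Iw g
    have hub : (M:ℝ) < 2^((n:ℝ)*(Iw+δ/2)) + 1 := by
      rw [hMdef]
      exact Nat.ceil_lt_add_one (by positivity)
    have h1 : (1:ℝ) ≤ 2^((n:ℝ)*(Iw+δ/2)) := by
      rw [show (1:ℝ) = (2:ℝ)^(0:ℝ) from (Real.rpow_zero 2).symm]
      apply Real.rpow_le_rpow_of_exponent_le one_le_two
      have : 0 < Iw + δ/2 := by linarith
      positivity
    have h2 : (2:ℝ)^((n:ℝ)*(Iw+δ/2)) + 1 ≤ 2^((n:ℝ)*(Iw+δ/2) + 1) := by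
      rw [Real.rpow_add two_pos, Real.rpow_one]
      linarith
    have h3 : (n:ℝ)*(Iw+δ/2) + 1 ≤ (n:ℝ)*(RD+δ) := by
      have hexp : (n:ℝ)*(RD+δ) - (n:ℝ)*(Iw+δ/2) = (n:ℝ)*g := by rw [hgdef]; ring
      linarith
    calc (M:ℝ) ≤ 2^((n:ℝ)*(Iw+δ/2)) + 1 := hub.le
      _ ≤ 2^((n:ℝ)*(Iw+δ/2) + 1) := h2
      _ ≤ 2^((n:ℝ)*(RD+δ)) := Real.rpow_le_rpow_of_exponent_le one_le_two h3
  -- the typical-pair condition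
  set Acond : (Fin n → 𝒳) → (Fin n → 𝒴) → Prop := fun x y =>
    (∑ k, lam (x k) (y k) ≤ n * (Iw + δ/4)) ∧ (∑ k, d (x k) (y k) ≤ n * (Dm + ε/2))
    with hAdef
  set G : (Fin n → 𝒴) → Prop := fun y =>
    (∀ k, 0 < PY (y k)) ∧ (∑ k, iot (y k) ≤ n * (Iw + δ/8)) ∧
    (∑ k, db (y k) ≤ n * (Dm + ε/4)) with hGdef
  set pA : (Fin n → 𝒴) → ℝ := fun y =>
    ∑ x : Fin n → 𝒳, (∏ k, PX (x k)) * (if Acond x y then 1 else 0) with hpAdef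
  have hpA0 : ∀ y, 0 ≤ pA y := fun y => Finset.sum_nonneg fun x _ =>
    mul_nonneg (Finset.prod_nonneg fun k _ => hPX0 _) (by positivity)
  have hpA1 : ∀ y, pA y ≤ 1 := by
    intro y
    rw [hpAdef]
    calc ∑ x : Fin n → 𝒳, (∏ k, PX (x k)) * (if Acond x y then 1 else 0)
        ≤ ∑ x : Fin n → 𝒳, ∏ k, PX (x k) := Finset.sum_le_sum fun x _ =>
          mul_le_of_le_one_right (Finset.prod_nonneg fun k _ => hPX0 _)
            (by split_ifs <;> norm_num)
      _ = 1 := by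
          rw [aux_sum_prod (fun (_ : Fin n) (x : 𝒳) => PX x)]
          simp [hPX1]
  -- conditional probability of the typical set, and change of measure
  have habs : ∀ a b : ℝ, |a - b| ≤ |a| + |b| := fun a b => by
    rw [sub_eq_add_neg]
    exact (abs_add_le a (-b)).trans (by rw [abs_neg])
  have hQA : ∀ y : Fin n → 𝒴, G y →
      1 - K/n ≤ ∑ x : Fin n → 𝒳, (∏ k, W (x k) (y k)) * (if Acond x y then 1 else 0) := by
    intro y hGy
    simp only [hGdef] at hGy
    obtain ⟨hGpos, hGι, hGd⟩ := hGy
    have hW0y : ∀ (k : Fin n) (x : 𝒳), 0 ≤ W x (y k) := fun k x => hW0 x (y k)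
    have hQ1 : ∑ x : Fin n → 𝒳, ∏ k, W (x k) (y k) = 1 := by
      rw [aux_sum_prod (fun k x => W x (y k))]
      exact Finset.prod_eq_one fun k _ => hW1 (y k)
    have hiotsum : ∀ k : Fin n, (∑ z, W z (y k) * lam z (y k)) = iot (y k) := fun k => by
      rw [hiotdef]
    have hdbsum : ∀ k : Fin n, (∑ z, W z (y k) * d z (y k)) = db (y k) := fun k => by
      rw [hdbdef]
    have cheb1 : ∑ x : Fin n → 𝒳, (∏ k, W (x k) (y k)) *
        (if (∑ k, ∑ z, W z (y k) * lam z (y k)) + (n:ℝ) * (δ/8) ≤ ∑ k, lam (x k) (y k)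
          then (1:ℝ) else 0) ≤ (2*Bl)^2 / ((n:ℝ) * (δ/8)^2) := by
      refine aux_cheb n hn0 (fun k z => W z (y k)) (fun k z => lam z (y k)) hW0y
        (fun k => hW1 (y k)) (2*Bl) (δ/8) (by positivity) ?_
      intro k z
      have h1 : (∑ z', W z' (y k) * lam z' (y k)) = iot (y k) := hiotsum k
      rw [h1]
      calc |lam z (y k) - iot (y k)| ≤ |lam z (y k)| + |iot (y k)| := habs _ _
        _ ≤ Bl + Bl := add_le_add (hlamB _ _) (hiotB _)
        _ = 2*Bl := by ring
    have cheb2 : ∑ x : Fin n → 𝒳, (∏ k, W (x k) (y k)) *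
        (if (∑ k, ∑ z, W z (y k) * d z (y k)) + (n:ℝ) * (ε/4) ≤ ∑ k, d (x k) (y k)
          then (1:ℝ) else 0) ≤ dmax^2 / ((n:ℝ) * (ε/4)^2) := by
      refine aux_cheb n hn0 (fun k z => W z (y k)) (fun k z => d z (y k)) hW0y
        (fun k => hW1 (y k)) dmax (ε/4) (by positivity) ?_
      intro k z
      have h1 : (∑ z', W z' (y k) * d z' (y k)) = db (y k) := hdbsum k
      rw [h1]
      have h2 := hd z (y k)
      have h3 := hdb (y k)
      rw [abs_le]
      constructor <;> [linarith only [h2.1, h3.2]; linarith only [h2.2, h3.1]]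
    have hcompl : ∑ x : Fin n → 𝒳, (∏ k, W (x k) (y k)) * (if Acond x y then (1:ℝ) else 0)
        = 1 - ∑ x : Fin n → 𝒳, (∏ k, W (x k) (y k)) * (if Acond x y then (0:ℝ) else 1) := by
      calc ∑ x : Fin n → 𝒳, (∏ k, W (x k) (y k)) * (if Acond x y then (1:ℝ) else 0)
          = ∑ x : Fin n → 𝒳, ((∏ k, W (x k) (y k))
            - (∏ k, W (x k) (y k)) * (if Acond x y then (0:ℝ) else 1)) :=
            Finset.sum_congr rfl fun x _ => by split_ifs <;> simp
        _ = (∑ x : Fin n → 𝒳, ∏ k, W (x k) (y k))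
            - ∑ x : Fin n → 𝒳, (∏ k, W (x k) (y k)) * (if Acond x y then (0:ℝ) else 1) :=
            Finset.sum_sub_distrib _ _
        _ = 1 - ∑ x : Fin n → 𝒳, (∏ k, W (x k) (y k)) * (if Acond x y then (0:ℝ) else 1) := by
            rw [hQ1]
    rw [hcompl]
    have hbad : ∑ x : Fin n → 𝒳, (∏ k, W (x k) (y k)) * (if Acond x y then (0:ℝ) else 1)
        ≤ K / n := by
      have hpt : ∀ x : Fin n → 𝒳, (∏ k, W (x k) (y k)) * (if Acond x y then (0:ℝ) else 1)
          ≤ (∏ k, W (x k) (y k)) *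
            (if (∑ k, ∑ z, W z (y k) * lam z (y k)) + (n:ℝ) * (δ/8) ≤ ∑ k, lam (x k) (y k)
              then (1:ℝ) else 0)
          + (∏ k, W (x k) (y k)) *
            (if (∑ k, ∑ z, W z (y k) * d z (y k)) + (n:ℝ) * (ε/4) ≤ ∑ k, d (x k) (y k)
              then (1:ℝ) else 0) := by
        intro x
        have hWp : (0:ℝ) ≤ ∏ k, W (x k) (y k) :=
          Finset.prod_nonneg fun k _ => hW0 _ _
        by_cases hA : Acond x y
        · rw [if_pos hA, mul_zero]
          have t1 : (0:ℝ) ≤ (∏ k, W (x k) (y k)) *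
              (if (∑ k, ∑ z, W z (y k) * lam z (y k)) + (n:ℝ) * (δ/8) ≤ ∑ k, lam (x k) (y k)
                then (1:ℝ) else 0) :=
            mul_nonneg hWp (by split_ifs <;> norm_num)
          have t2 : (0:ℝ) ≤ (∏ k, W (x k) (y k)) *
              (if (∑ k, ∑ z, W z (y k) * d z (y k)) + (n:ℝ) * (ε/4) ≤ ∑ k, d (x k) (y k)
                then (1:ℝ) else 0) :=
            mul_nonneg hWp (by split_ifs <;> norm_num)
          linarith only [t1, t2]
        · rw [if_neg hA]
          simp only [hAdef, not_and_or, not_le] at hA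
          rcases hA with h | h
          · have hev : (∑ k, ∑ z, W z (y k) * lam z (y k)) + (n:ℝ) * (δ/8)
                ≤ ∑ k, lam (x k) (y k) := by
              have he : (∑ k, ∑ z, W z (y k) * lam z (y k)) = ∑ k, iot (y k) :=
                Finset.sum_congr rfl fun k _ => hiotsum k
              rw [he]
              have hr : (n:ℝ)*(Iw+δ/8) + (n:ℝ)*(δ/8) = (n:ℝ)*(Iw+δ/4) := by ring
              linarith only [h, hGι, hr]
            rw [if_pos hev]
            have : (0:ℝ) ≤ (∏ k, W (x k) (y k)) * (if (∑ k, ∑ z, W z (y k) * d z (y k))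
                + (n:ℝ) * (ε/4) ≤ ∑ k, d (x k) (y k) then (1:ℝ) else 0) :=
              mul_nonneg hWp (by split_ifs <;> norm_num)
            linarith only [this]
          · have hev : (∑ k, ∑ z, W z (y k) * d z (y k)) + (n:ℝ) * (ε/4)
                ≤ ∑ k, d (x k) (y k) := by
              have he : (∑ k, ∑ z, W z (y k) * d z (y k)) = ∑ k, db (y k) :=
                Finset.sum_congr rfl fun k _ => hdbsum k
              rw [he]
              have hr : (n:ℝ)*(Dm+ε/4) + (n:ℝ)*(ε/4) = (n:ℝ)*(Dm+ε/2) := by ring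
              linarith only [h, hGd, hr]
            rw [if_pos hev]
            have : (0:ℝ) ≤ (∏ k, W (x k) (y k)) * (if (∑ k, ∑ z, W z (y k) * lam z (y k))
                + (n:ℝ) * (δ/8) ≤ ∑ k, lam (x k) (y k) then (1:ℝ) else 0) :=
              mul_nonneg hWp (by split_ifs <;> norm_num)
            linarith only [this]
      calc ∑ x : Fin n → 𝒳, (∏ k, W (x k) (y k)) * (if Acond x y then (0:ℝ) else 1)
          ≤ ∑ x : Fin n → 𝒳, ((∏ k, W (x k) (y k)) *
              (if (∑ k, ∑ z, W z (y k) * lam z (y k)) + (n:ℝ) * (δ/8) ≤ ∑ k, lam (x k) (y k)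
                then (1:ℝ) else 0)
            + (∏ k, W (x k) (y k)) *
              (if (∑ k, ∑ z, W z (y k) * d z (y k)) + (n:ℝ) * (ε/4) ≤ ∑ k, d (x k) (y k)
                then (1:ℝ) else 0)) := Finset.sum_le_sum fun x _ => hpt x
        _ = _ + _ := Finset.sum_add_distrib
        _ ≤ (2*Bl)^2 / ((n:ℝ) * (δ/8)^2) + dmax^2 / ((n:ℝ) * (ε/4)^2) := add_le_add cheb1 cheb2
        _ = K / n := by
            rw [hKdef]
            clear_value Bl
            field_simp
    linarith only [hbad]
  have hprodpow : ∀ (t : Fin n → ℝ), ∏ k, (2:ℝ)^(t k) = (2:ℝ)^(∑ k, t k) := by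
    intro t
    simp_rw [Real.rpow_def_of_pos two_pos]
    rw [← Real.exp_sum, ← Finset.mul_sum]
  have hpy : ∀ y : Fin n → 𝒴, G y →
      (2:ℝ) ^ (-(n:ℝ) * (Iw + δ/4)) * (1 - K/n) ≤ pA y := by
    intro y hGy
    have hGpos : ∀ k, 0 < PY (y k) := by
      simp only [hGdef] at hGy; exact hGy.1
    have hkey : ∀ x : Fin n → 𝒳, Acond x y →
        (2:ℝ) ^ (-(n:ℝ) * (Iw + δ/4)) * ∏ k, W (x k) (y k) ≤ ∏ k, PX (x k) := by
      intro x hA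
      have hAlam : ∑ k, lam (x k) (y k) ≤ (n:ℝ) * (Iw + δ/4) := by
        simp only [hAdef] at hA; exact hA.1
      have coord : ∀ k : Fin n, W (x k) (y k) * (2:ℝ)^(-(lam (x k) (y k))) ≤ PX (x k) := by
        intro k
        rcases (hW0 (x k) (y k)).lt_or_eq with hWpos | hWzero
        · have hPXpos : 0 < PX (x k) := by
            have hle : PY (y k) * W (x k) (y k) ≤ PX (x k) := by
              rw [hPXdef]
              exact Finset.single_le_sum (f := fun y' => PY y' * W (x k) y')
                (fun y' _ => mul_nonneg (hPY0 y') (hW0 (x k) y')) (Finset.mem_univ (y k))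
            linarith only [hle, mul_pos (hGpos k) hWpos]
          have heq : (2:ℝ)^(-(lam (x k) (y k))) = PX (x k) / W (x k) (y k) := by
            rw [hlamdef]
            rw [Real.rpow_neg (by norm_num : (0:ℝ) ≤ 2)]
            rw [Real.rpow_logb two_pos (by norm_num) (div_pos hWpos hPXpos)]
            rw [inv_div]
          rw [heq, mul_div_cancel₀ _ hWpos.ne']
        · rw [← hWzero, zero_mul]
          exact hPX0 _
      calc (2:ℝ) ^ (-(n:ℝ) * (Iw + δ/4)) * ∏ k, W (x k) (y k)
          ≤ (2:ℝ) ^ (-(∑ k, lam (x k) (y k))) * ∏ k, W (x k) (y k) := by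
            apply mul_le_mul_of_nonneg_right ?_
              (Finset.prod_nonneg fun k _ => hW0 _ _)
            apply Real.rpow_le_rpow_of_exponent_le one_le_two
            linarith only [hAlam]
        _ = ∏ k, (W (x k) (y k) * (2:ℝ)^(-(lam (x k) (y k)))) := by
            rw [Finset.prod_mul_distrib]
            rw [hprodpow fun k => -(lam (x k) (y k))]
            rw [← Finset.sum_neg_distrib]
            ring
        _ ≤ ∏ k, PX (x k) := Finset.prod_le_prod
            (fun k _ => mul_nonneg (hW0 _ _) (Real.rpow_nonneg (by norm_num) _))
            (fun k _ => coord k)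
    have hmono : (2:ℝ) ^ (-(n:ℝ) * (Iw + δ/4)) *
        ∑ x : Fin n → 𝒳, (∏ k, W (x k) (y k)) * (if Acond x y then (1:ℝ) else 0) ≤ pA y := by
      rw [hpAdef, Finset.mul_sum]
      apply Finset.sum_le_sum
      intro x _
      by_cases hA : Acond x y
      · rw [if_pos hA, mul_one, mul_one]
        exact hkey x hA
      · rw [if_neg hA, mul_zero, mul_zero, mul_zero]
    have h2 := hQA y hGy
    have hpow0 : (0:ℝ) < (2:ℝ) ^ (-(n:ℝ) * (Iw + δ/4)) := Real.rpow_pos_of_pos two_pos _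
    calc (2:ℝ) ^ (-(n:ℝ) * (Iw + δ/4)) * (1 - K/n)
        ≤ (2:ℝ) ^ (-(n:ℝ) * (Iw + δ/4)) *
          ∑ x : Fin n → 𝒳, (∏ k, W (x k) (y k)) * (if Acond x y then (1:ℝ) else 0) :=
          mul_le_mul_of_nonneg_left h2 hpow0.le
      _ ≤ pA y := hmono
  -- source atypicality
  have hGbad : ∑ y : Fin n → 𝒴, (∏ k, PY (y k)) * (if G y then 0 else 1) ≤ K/n := by
    have hIwsum : (∑ z, PY z * iot z) = Iw := hIwdef.symm
    have hDmsum : (∑ z, PY z * db z) = Dm := hDmdef.symm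
    have cheb1 : ∑ y : Fin n → 𝒴, (∏ k, PY (y k)) *
        (if (∑ k : Fin n, ∑ z, PY z * iot z) + (n:ℝ) * (δ/8) ≤ ∑ k, iot (y k)
          then (1:ℝ) else 0) ≤ (2*Bl)^2 / ((n:ℝ) * (δ/8)^2) := by
      refine aux_cheb n hn0 (fun k z => PY z) (fun k z => iot z) (fun k z => hPY0 z)
        (fun k => hPY1) (2*Bl) (δ/8) (by positivity) ?_
      intro k z
      rw [hIwsum]
      calc |iot z - Iw| ≤ |iot z| + |Iw| := habs _ _
        _ ≤ Bl + Bl := add_le_add (hiotB _) hIwB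
        _ = 2*Bl := by ring
    have cheb2 : ∑ y : Fin n → 𝒴, (∏ k, PY (y k)) *
        (if (∑ k : Fin n, ∑ z, PY z * db z) + (n:ℝ) * (ε/4) ≤ ∑ k, db (y k)
          then (1:ℝ) else 0) ≤ dmax^2 / ((n:ℝ) * (ε/4)^2) := by
      refine aux_cheb n hn0 (fun k z => PY z) (fun k z => db z) (fun k z => hPY0 z)
        (fun k => hPY1) dmax (ε/4) (by positivity) ?_
      intro k z
      rw [hDmsum]
      have h2 := hdb z
      have h3 : 0 ≤ Dm := hDm0
      have h4 : Dm ≤ dmax := by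
        rw [hDmdef]
        calc ∑ y, PY y * db y ≤ ∑ y, PY y * dmax := Finset.sum_le_sum fun y _ =>
              mul_le_mul_of_nonneg_left (hdb y).2 (hPY0 y)
          _ = dmax := by rw [← Finset.sum_mul, hPY1, one_mul]
      rw [abs_le]
      constructor <;> [linarith only [h2.1, h3, h4]; linarith only [h2.2, h3, h4]]
    have hpt : ∀ y : Fin n → 𝒴, (∏ k, PY (y k)) * (if G y then (0:ℝ) else 1)
        ≤ (∏ k, PY (y k)) *
          (if (∑ k : Fin n, ∑ z, PY z * iot z) + (n:ℝ) * (δ/8) ≤ ∑ k, iot (y k)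
            then (1:ℝ) else 0)
        + (∏ k, PY (y k)) *
          (if (∑ k : Fin n, ∑ z, PY z * db z) + (n:ℝ) * (ε/4) ≤ ∑ k, db (y k)
            then (1:ℝ) else 0) := by
      intro y
      have hPp : (0:ℝ) ≤ ∏ k, PY (y k) := Finset.prod_nonneg fun k _ => hPY0 _
      have ht1 : (0:ℝ) ≤ (∏ k, PY (y k)) *
          (if (∑ k : Fin n, ∑ z, PY z * iot z) + (n:ℝ) * (δ/8) ≤ ∑ k, iot (y k)
            then (1:ℝ) else 0) := mul_nonneg hPp (by split_ifs <;> norm_num)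
      have ht2 : (0:ℝ) ≤ (∏ k, PY (y k)) *
          (if (∑ k : Fin n, ∑ z, PY z * db z) + (n:ℝ) * (ε/4) ≤ ∑ k, db (y k)
            then (1:ℝ) else 0) := mul_nonneg hPp (by split_ifs <;> norm_num)
      by_cases hGy : G y
      · rw [if_pos hGy, mul_zero]
        linarith only [ht1, ht2]
      · rw [if_neg hGy, mul_one]
        simp only [hGdef, not_and_or] at hGy
        rcases hGy with h | h | h
        · push_neg at h
          obtain ⟨k0, hk0⟩ := h
          have hz : PY (y k0) = 0 := le_antisymm hk0 (hPY0 _)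
          have : (∏ k, PY (y k)) = 0 := Finset.prod_eq_zero (Finset.mem_univ k0) hz
          rw [this]
          linarith only [ht1, ht2]
        · push_neg at h
          have hev : (∑ k : Fin n, ∑ z, PY z * iot z) + (n:ℝ) * (δ/8) ≤ ∑ k, iot (y k) := by
            have he : (∑ k : Fin n, ∑ z, PY z * iot z) = (n:ℝ) * Iw := by
              simp_rw [hIwsum]
              rw [Finset.sum_const, Finset.card_univ, Fintype.card_fin, nsmul_eq_mul]
            rw [he]
            have hr : (n:ℝ)*Iw + (n:ℝ)*(δ/8) = (n:ℝ)*(Iw+δ/8) := by ring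
            linarith only [h, hr]
          rw [if_pos hev, mul_one]
          linarith only [ht2]
        · push_neg at h
          have hev : (∑ k : Fin n, ∑ z, PY z * db z) + (n:ℝ) * (ε/4) ≤ ∑ k, db (y k) := by
            have he : (∑ k : Fin n, ∑ z, PY z * db z) = (n:ℝ) * Dm := by
              simp_rw [hDmsum]
              rw [Finset.sum_const, Finset.card_univ, Fintype.card_fin, nsmul_eq_mul]
            rw [he]
            have hr : (n:ℝ)*Dm + (n:ℝ)*(ε/4) = (n:ℝ)*(Dm+ε/4) := by ring
            linarith only [h, hr]
          rw [if_pos hev, mul_one]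
          linarith only [ht1]
    calc ∑ y : Fin n → 𝒴, (∏ k, PY (y k)) * (if G y then (0:ℝ) else 1)
        ≤ ∑ y : Fin n → 𝒴, ((∏ k, PY (y k)) *
            (if (∑ k : Fin n, ∑ z, PY z * iot z) + (n:ℝ) * (δ/8) ≤ ∑ k, iot (y k)
              then (1:ℝ) else 0)
          + (∏ k, PY (y k)) *
            (if (∑ k : Fin n, ∑ z, PY z * db z) + (n:ℝ) * (ε/4) ≤ ∑ k, db (y k)
              then (1:ℝ) else 0)) := Finset.sum_le_sum fun y _ => hpt y
      _ = _ + _ := Finset.sum_add_distrib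
      _ ≤ (2*Bl)^2 / ((n:ℝ) * (δ/8)^2) + dmax^2 / ((n:ℝ) * (ε/4)^2) := add_le_add cheb1 cheb2
      _ = K / n := by
          rw [hKdef]
          clear_value Bl
          field_simp
  have hPYn1 : ∑ y : Fin n → 𝒴, ∏ k, PY (y k) = 1 := by
    rw [aux_sum_prod (fun (_ : Fin n) (z : 𝒴) => PY z)]
    exact Finset.prod_eq_one fun k _ => hPY1
  -- existence of a good codebook
  have hex : ∃ C : Fin M → (Fin n → 𝒳),
      ∑ y : Fin n → 𝒴, (∏ k, PY (y k)) * (if ∀ i, ¬ Acond (C i) y then 1 else 0)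
        ≤ ∑ y : Fin n → 𝒴, (∏ k, PY (y k)) * (1 - pA y)^M := by
    set w : (Fin M → (Fin n → 𝒳)) → ℝ := fun Cb => ∏ i, ∏ k, PX (Cb i k) with hwdef
    have hw0 : ∀ Cb, 0 ≤ w Cb := fun Cb => Finset.prod_nonneg fun i _ =>
      Finset.prod_nonneg fun k _ => hPX0 _
    have hwsum : ∑ Cb : Fin M → (Fin n → 𝒳), w Cb = 1 := by
      rw [hwdef]
      rw [aux_sum_prod (fun (_ : Fin M) (c : Fin n → 𝒳) => ∏ k, PX (c k))]
      apply Finset.prod_eq_one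
      intro i _
      rw [aux_sum_prod (fun (_ : Fin n) (x : 𝒳) => PX x)]
      exact Finset.prod_eq_one fun k _ => hPX1
    have hfactor : ∀ y : Fin n → 𝒴,
        ∑ Cb : Fin M → (Fin n → 𝒳), w Cb * (if ∀ i, ¬ Acond (Cb i) y then (1:ℝ) else 0)
        = (1 - pA y)^M := by
      intro y
      have step1 : ∀ Cb : Fin M → (Fin n → 𝒳),
          w Cb * (if ∀ i, ¬ Acond (Cb i) y then (1:ℝ) else 0)
          = ∏ i, ((∏ k, PX (Cb i k)) * (if ¬ Acond (Cb i) y then (1:ℝ) else 0)) := by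
        intro Cb
        rw [Finset.prod_mul_distrib, aux_prod_ind (fun i => ¬ Acond (Cb i) y)]
      simp_rw [step1]
      rw [aux_sum_prod (fun (_ : Fin M) (c : Fin n → 𝒳) =>
        (∏ k, PX (c k)) * (if ¬ Acond c y then (1:ℝ) else 0))]
      have hone : (∑ c : Fin n → 𝒳, (∏ k, PX (c k)) * (if ¬ Acond c y then (1:ℝ) else 0))
          = 1 - pA y := by
        have hsub : ∀ c : Fin n → 𝒳, (∏ k, PX (c k)) * (if ¬ Acond c y then (1:ℝ) else 0)
            = (∏ k, PX (c k)) - (∏ k, PX (c k)) * (if Acond c y then (1:ℝ) else 0) := by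
          intro c
          by_cases hc : Acond c y
          · rw [if_neg (not_not_intro hc), if_pos hc]
            simp
          · rw [if_pos hc, if_neg hc]
            simp
        simp_rw [hsub]
        rw [Finset.sum_sub_distrib]
        rw [aux_sum_prod (fun (_ : Fin n) (x : 𝒳) => PX x)]
        rw [Finset.prod_eq_one fun k _ => hPX1]
      rw [hone, Finset.prod_const, Finset.card_univ, Fintype.card_fin]
    have havg : ∑ Cb : Fin M → (Fin n → 𝒳),
        w Cb * (∑ y : Fin n → 𝒴, (∏ k, PY (y k)) * (if ∀ i, ¬ Acond (Cb i) y then (1:ℝ) else 0))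
        = ∑ y : Fin n → 𝒴, (∏ k, PY (y k)) * (1 - pA y)^M := by
      simp_rw [Finset.mul_sum]
      rw [Finset.sum_comm]
      apply Finset.sum_congr rfl
      intro y _
      calc ∑ Cb : Fin M → (Fin n → 𝒳),
            w Cb * ((∏ k, PY (y k)) * (if ∀ i, ¬ Acond (Cb i) y then (1:ℝ) else 0))
          = (∏ k, PY (y k)) * ∑ Cb : Fin M → (Fin n → 𝒳),
              w Cb * (if ∀ i, ¬ Acond (Cb i) y then (1:ℝ) else 0) := by
            rw [Finset.mul_sum]
            apply Finset.sum_congr rfl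
            intro Cb _
            ring
        _ = (∏ k, PY (y k)) * (1 - pA y)^M := by rw [hfactor y]
    by_contra hcon
    push_neg at hcon
    have h0 : ∃ Cb : Fin M → (Fin n → 𝒳), 0 < w Cb := by
      by_contra h'
      push_neg at h'
      have : ∑ Cb : Fin M → (Fin n → 𝒳), w Cb ≤ 0 := Finset.sum_nonpos fun Cb _ => h' Cb
      rw [hwsum] at this
      linarith only [this]
    obtain ⟨C0, hC0⟩ := h0
    have hlt : ∑ Cb : Fin M → (Fin n → 𝒳),
          w Cb * (∑ y : Fin n → 𝒴, (∏ k, PY (y k)) * (1 - pA y)^M)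
        < ∑ Cb : Fin M → (Fin n → 𝒳),
          w Cb * (∑ y : Fin n → 𝒴, (∏ k, PY (y k)) *
            (if ∀ i, ¬ Acond (Cb i) y then (1:ℝ) else 0)) := by
      apply Finset.sum_lt_sum
      · intro Cb _
        exact mul_le_mul_of_nonneg_left (hcon Cb).le (hw0 Cb)
      · exact ⟨C0, Finset.mem_univ _, mul_lt_mul_of_pos_left (hcon C0) hC0⟩
    rw [havg, ← Finset.sum_mul, hwsum, one_mul] at hlt
    exact lt_irrefl _ hlt
  obtain ⟨C, hC⟩ := hex
  -- final bound on the failure probability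
  have hfail : ∑ y : Fin n → 𝒴, (∏ k, PY (y k)) * (if ∀ i, ¬ Acond (C i) y then 1 else 0)
      ≤ 8/((n:ℝ)*δ*Real.log 2) + K/n := by
    set q : ℝ := (2:ℝ)^(-(n:ℝ)*(Iw+δ/4)) * (1/2) with hqdef
    have hq0 : (0:ℝ) < q := by
      rw [hqdef]
      positivity
    have hqle : ∀ y : Fin n → 𝒴, G y → q ≤ pA y := by
      intro y hGy
      have h1 := hpy y hGy
      have h2 : q ≤ (2:ℝ)^(-(n:ℝ)*(Iw+δ/4)) * (1 - K/n) := by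
        rw [hqdef]
        exact mul_le_mul_of_nonneg_left (by linarith only [hnK])
          (Real.rpow_pos_of_pos two_pos _).le
      linarith only [h1, h2]
    have hpt : ∀ y : Fin n → 𝒴, (∏ k, PY (y k)) * (1 - pA y)^M
        ≤ Real.exp ((M:ℝ) * (-q)) * ((∏ k, PY (y k)) * (if G y then 1 else 0))
          + (∏ k, PY (y k)) * (if G y then 0 else 1) := by
      intro y
      have hPp : (0:ℝ) ≤ ∏ k, PY (y k) := Finset.prod_nonneg fun k _ => hPY0 _
      by_cases hGy : G y
      · rw [if_pos hGy, if_pos hGy]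
        have hqy := hqle y hGy
        have hpAy := hpA1 y
        have c1 : (1 - pA y)^M ≤ Real.exp ((M:ℝ) * (-q)) := by
          calc (1 - pA y)^M ≤ (1 - q)^M :=
                pow_le_pow_left₀ (by linarith only [hpAy]) (by linarith only [hqy]) M
            _ ≤ (Real.exp (-q))^M :=
                pow_le_pow_left₀ (by linarith only [hqy, hpAy])
                  (by linarith only [Real.add_one_le_exp (-q)]) M
            _ = Real.exp ((M:ℝ) * (-q)) := by rw [← Real.exp_nat_mul]
        simp only [mul_one, mul_zero, add_zero]
        rw [mul_comm (Real.exp ((M:ℝ) * (-q))) _]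
        exact mul_le_mul_of_nonneg_left c1 hPp
      · rw [if_neg hGy, if_neg hGy]
        simp only [mul_one, mul_zero, add_zero, zero_add]
        have c1 : (1 - pA y)^M ≤ 1 := by
          apply pow_le_one₀ (by linarith only [hpA1 y]) (by linarith only [hpA0 y])
        exact mul_le_of_le_one_right hPp c1
    have hindG : ∑ y : Fin n → 𝒴, (∏ k, PY (y k)) * (if G y then (1:ℝ) else 0) ≤ 1 := by
      calc ∑ y : Fin n → 𝒴, (∏ k, PY (y k)) * (if G y then (1:ℝ) else 0)
          ≤ ∑ y : Fin n → 𝒴, ∏ k, PY (y k) := Finset.sum_le_sum fun y _ =>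
            mul_le_of_le_one_right (Finset.prod_nonneg fun k _ => hPY0 _)
              (by split_ifs <;> norm_num)
        _ = 1 := hPYn1
    have hexpb : Real.exp ((M:ℝ) * (-q)) ≤ 8/((n:ℝ)*δ*Real.log 2) := by
      have hMq : (n:ℝ)*δ/8 * Real.log 2 ≤ (M:ℝ) * q := by
        have s1 : (2:ℝ)^((n:ℝ)*(Iw+δ/2)) * q ≤ (M:ℝ) * q :=
          mul_le_mul_of_nonneg_right hMlb hq0.le
        have s2 : (2:ℝ)^((n:ℝ)*(Iw+δ/2)) * q = (2:ℝ)^((n:ℝ)*(δ/4)) * (1/2) := by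
          rw [hqdef, ← mul_assoc, ← Real.rpow_add two_pos]
          congr 2
          ring
        have s3 : (n:ℝ)*δ/8 * Real.log 2 ≤ (2:ℝ)^((n:ℝ)*(δ/4)) * (1/2) := by
          have h4 : (2:ℝ)^((n:ℝ)*(δ/4)) = Real.exp (Real.log 2 * ((n:ℝ)*(δ/4))) :=
            Real.rpow_def_of_pos two_pos _
          have h5 := Real.add_one_le_exp (Real.log 2 * ((n:ℝ)*(δ/4)))
          rw [h4]
          have h6 : (n:ℝ)*δ/8*Real.log 2 = (Real.log 2 * ((n:ℝ)*(δ/4)))/2 := by ring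
          linarith only [h5, h6]
        linarith only [s1, s2, s3]
      have h1 : (0:ℝ) < (n:ℝ)*δ/8*Real.log 2 := by positivity
      have h2 : (M:ℝ)*q ≤ Real.exp ((M:ℝ)*q) := by
        linarith only [Real.add_one_le_exp ((M:ℝ)*q)]
      rw [show (M:ℝ)*(-q) = -((M:ℝ)*q) by ring, Real.exp_neg]
      calc (Real.exp ((M:ℝ)*q))⁻¹ ≤ ((n:ℝ)*δ/8*Real.log 2)⁻¹ := by
            apply inv_anti₀ h1
            linarith only [hMq, h2]
        _ = 8/((n:ℝ)*δ*Real.log 2) := by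
            rw [inv_eq_one_div]
            rw [div_eq_div_iff (by positivity) (by positivity)]
            ring
    calc ∑ y : Fin n → 𝒴, (∏ k, PY (y k)) * (if ∀ i, ¬ Acond (C i) y then 1 else 0)
        ≤ ∑ y : Fin n → 𝒴, (∏ k, PY (y k)) * (1 - pA y)^M := hC
      _ ≤ ∑ y : Fin n → 𝒴, (Real.exp ((M:ℝ) * (-q)) *
            ((∏ k, PY (y k)) * (if G y then 1 else 0))
          + (∏ k, PY (y k)) * (if G y then 0 else 1)) := Finset.sum_le_sum fun y _ => hpt y
      _ = Real.exp ((M:ℝ) * (-q)) *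
            (∑ y : Fin n → 𝒴, (∏ k, PY (y k)) * (if G y then 1 else 0))
          + ∑ y : Fin n → 𝒴, (∏ k, PY (y k)) * (if G y then 0 else 1) := by
          rw [Finset.sum_add_distrib, Finset.mul_sum]
      _ ≤ Real.exp ((M:ℝ) * (-q)) * 1 + K/n := by
          apply add_le_add ?_ hGbad
          exact mul_le_mul_of_nonneg_left hindG (Real.exp_pos _).le
      _ ≤ 8/((n:ℝ)*δ*Real.log 2) + K/n := by
          rw [mul_one]
          exact add_le_add_left hexpb _
  -- define encoder and decoders
  have hindsucc : ∑ y : Fin n → 𝒴, (∏ k, PY (y k)) *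
      (if ∃ i, Acond (C i) y then (1:ℝ) else 0) ≤ 1 := by
    calc ∑ y : Fin n → 𝒴, (∏ k, PY (y k)) * (if ∃ i, Acond (C i) y then (1:ℝ) else 0)
        ≤ ∑ y : Fin n → 𝒴, ∏ k, PY (y k) := Finset.sum_le_sum fun y _ =>
          mul_le_of_le_one_right (Finset.prod_nonneg fun k _ => hPY0 _)
            (by split_ifs <;> norm_num)
      _ = 1 := hPYn1
  have hlast : dmax * (8/((n:ℝ)*δ*Real.log 2) + K/n) ≤ ε/2 := by
    clear_value K Iw Dm Bl g
    have hA0 : (0:ℝ) ≤ 8/(δ*Real.log 2) + K :=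
      add_nonneg (div_nonneg (by norm_num) (mul_nonneg hδ.le hlog2.le)) hK0
    have heq : dmax * (8/((n:ℝ)*δ*Real.log 2) + K/n) = dmax * (8/(δ*Real.log 2) + K) / n := by
      field_simp
    rw [heq, div_le_iff₀ hn0R]
    have h2 : dmax * (8/(δ*Real.log 2) + K) ≤ (dmax+1)*(8/(δ*Real.log 2)+K) :=
      mul_le_mul_of_nonneg_right (by linarith only) hA0
    have h4 : (dmax+1)*(8/(δ*Real.log 2)+K)/(ε/2) ≤ (n:ℝ) - 1 := by linarith only [hnfin]
    rw [div_le_iff₀ (by positivity : (0:ℝ) < ε/2)] at h4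
    have h6 : ((n:ℝ) - 1) * (ε/2) = (ε/2)*((n:ℝ)) - ε/2 := by ring
    linarith only [h2, h4, h6, hε]
  refine ⟨n, hn1', M, fun y => if h : ∃ i, Acond (C i) y then h.choose else ⟨0, hMpos⟩,
    fun k i _ => C i k, hMub, ?_⟩
  have hppt : ∀ y : Fin n → 𝒴,
      (∏ k, PY (y k)) * ((n:ℝ)⁻¹ * ∑ k : Fin n,
        d (C (if h : ∃ i, Acond (C i) y then h.choose else ⟨0, hMpos⟩) k) (y k))
      ≤ (Dm + ε/2) * ((∏ k, PY (y k)) * (if ∃ i, Acond (C i) y then 1 else 0))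
        + dmax * ((∏ k, PY (y k)) * (if ∀ i, ¬ Acond (C i) y then 1 else 0)) := by
    intro y
    have hPp : (0:ℝ) ≤ ∏ k, PY (y k) := Finset.prod_nonneg fun k _ => hPY0 _
    by_cases hs : ∃ i, Acond (C i) y
    · rw [dif_pos hs, if_pos hs, if_neg (by
        intro hall
        obtain ⟨i, hi⟩ := hs
        exact hall i hi)]
      have hspec := hs.choose_spec
      simp only [hAdef] at hspec
      have hd2 : (n:ℝ)⁻¹ * ∑ k : Fin n, d (C hs.choose k) (y k) ≤ Dm + ε/2 := by
        rw [inv_mul_le_iff₀ hn0R]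
        exact hspec.2
      rw [mul_one, mul_zero, mul_zero, add_zero, mul_comm (Dm + ε/2) _]
      exact mul_le_mul_of_nonneg_left hd2 hPp
    · rw [dif_neg hs, if_neg hs, if_pos (by
        intro i hi
        exact hs ⟨i, hi⟩)]
      have hdsum : ∑ k : Fin n, d (C ⟨0, hMpos⟩ k) (y k) ≤ (n:ℝ) * dmax := by
        calc ∑ k : Fin n, d (C ⟨0, hMpos⟩ k) (y k) ≤ ∑ _k : Fin n, dmax :=
              Finset.sum_le_sum fun k _ => (hd _ _).2
          _ = (n:ℝ) * dmax := by
              rw [Finset.sum_const, Finset.card_univ, Fintype.card_fin, nsmul_eq_mul]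
      have hd2 : (n:ℝ)⁻¹ * ∑ k : Fin n, d (C ⟨0, hMpos⟩ k) (y k) ≤ dmax := by
        rw [inv_mul_le_iff₀ hn0R]
        exact hdsum
      rw [mul_one, mul_zero, mul_zero, zero_add, mul_comm dmax _]
      exact mul_le_mul_of_nonneg_left hd2 hPp
  calc ∑ y : Fin n → 𝒴, (∏ k, PY (y k)) * ((n:ℝ)⁻¹ * ∑ k : Fin n,
          d (C (if h : ∃ i, Acond (C i) y then h.choose else ⟨0, hMpos⟩) k) (y k))
      ≤ ∑ y : Fin n → 𝒴, ((Dm + ε/2) * ((∏ k, PY (y k)) * (if ∃ i, Acond (C i) y then 1 else 0))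
        + dmax * ((∏ k, PY (y k)) * (if ∀ i, ¬ Acond (C i) y then 1 else 0))) :=
        Finset.sum_le_sum fun y _ => hppt y
    _ = (Dm + ε/2) * (∑ y : Fin n → 𝒴, (∏ k, PY (y k)) * (if ∃ i, Acond (C i) y then 1 else 0))
        + dmax * (∑ y : Fin n → 𝒴, (∏ k, PY (y k)) * (if ∀ i, ¬ Acond (C i) y then 1 else 0)) := by
        rw [Finset.sum_add_distrib, Finset.mul_sum, Finset.mul_sum]
    _ ≤ (Dm + ε/2) * 1 + dmax * (8/((n:ℝ)*δ*Real.log 2) + K/n) := by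
        apply add_le_add
        · exact mul_le_mul_of_nonneg_left hindsucc (by linarith only [hDm0, hε])
        · exact mul_le_mul_of_nonneg_left hfail hdmax0
    _ ≤ D + ε := by
        rw [mul_one]
        linarith only [hlast, hDmD]
end

section
/- Let 𝒳, 𝒴 be finite alphabets, P_Y a strictly positive probability mass function on 𝒴, d: 𝒳×𝒴 → [0, d_max] a bounded distortion measure, and P_XY a joint probability mass function on 𝒳×𝒴 with 𝒴-marginal P_Y. Then for every α ∈ (0,1) there exists a joint probability mass function Q_XY on 𝒳×𝒴 with 𝒴-marginal P_Y such that: Q_XY(x,y) > 0 for all (x,y); the mutual information of Q_XY satisfies I_Q(X;Y) ≤ I_P(X;Y) + α·log₂|𝒳|; and the expected distortion satisfies Σ_{x,y} Q_XY(x,y) d(x,y) ≤ Σ_{x,y} P_XY(x,y) d(x,y) + α·d_max. -/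
/-- Basic log inequality: for `t ≥ 0`, `u > 0`, `s > 0`,
`t·log₂ s + (t − u·s)/ln 2 ≤ t·log₂(t/u)`. -/
lemma helper16 (t u s : ℝ) (ht : 0 ≤ t) (hu : 0 < u) (hs : 0 < s) :
    t * Real.logb 2 s + (t - u * s) / Real.log 2 ≤ t * Real.logb 2 (t / u) := by
  have hL : 0 < Real.log 2 := Real.log_pos (by norm_num)
  rcases ht.eq_or_lt with h0 | ht
  · rw [← h0]
    simp only [zero_mul, zero_add, zero_sub]
    apply div_nonpos_of_nonpos_of_nonneg _ hL.le
    nlinarith [mul_pos hu hs]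
  · have key : t * Real.log s + (t - u * s) ≤ t * Real.log (t / u) := by
      have h1 : Real.log (u * s / t) ≤ u * s / t - 1 :=
        Real.log_le_sub_one_of_pos (by positivity)
      have h2 : Real.log (u * s / t) = Real.log (u * s) - Real.log t :=
        Real.log_div (by positivity) ht.ne'
      have hlus : Real.log (u * s) = Real.log u + Real.log s :=
        Real.log_mul hu.ne' hs.ne'
      have hlt : Real.log (t / u) = Real.log t - Real.log u :=
        Real.log_div ht.ne' hu.ne'
      have h3 : t * (Real.log (u * s) - Real.log t) ≤ t * (u * s / t - 1) := by
        apply mul_le_mul_of_nonneg_left _ ht.le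
        rw [← h2]; exact h1
      have h4 : t * (u * s / t - 1) = u * s - t := by
        field_simp
      rw [hlt]
      rw [hlus] at h3
      nlinarith [h3, h4]
    rw [Real.logb, Real.logb]
    calc t * (Real.log s / Real.log 2) + (t - u * s) / Real.log 2
        = (t * Real.log s + (t - u * s)) / Real.log 2 := by ring
      _ ≤ (t * Real.log (t / u)) / Real.log 2 := by
          apply div_le_div_of_nonneg_right key hL.le
      _ = t * (Real.log (t / u) / Real.log 2) := by ring

/-- Two-term log-sum inequality with equal second pair:
`(a+c)·log₂((a+c)/(b+c)) ≤ a·log₂(a/b)`. -/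
lemma key16 (a b c : ℝ) (ha : 0 ≤ a) (hb : 0 < b) (hc : 0 < c) :
    (a + c) * Real.logb 2 ((a + c) / (b + c)) ≤ a * Real.logb 2 (a / b) := by
  set s := (a + c) / (b + c) with hs
  have hspos : 0 < s := div_pos (by linarith) (by linarith)
  have h1 := helper16 a b s ha hb hspos
  have h2 := helper16 c c s hc.le hc hspos
  have hcc : c * Real.logb 2 (c / c) = 0 := by
    rw [div_self hc.ne']; simp
  have hsum : (b + c) * s = a + c := by
    rw [hs]; field_simp
  have e1 : (a - b * s) / Real.log 2 + (c - c * s) / Real.log 2 = 0 := by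
    rw [← add_div]
    have : (a - b * s) + (c - c * s) = 0 := by nlinarith [hsum]
    rw [this, zero_div]
  rw [hcc] at h2
  linarith [h1, h2, e1]

/-- Gibbs-type pointwise bound: `(t − u)/ln 2 ≤ t·log₂(t/u)`. -/
lemma gibbs16 (t u : ℝ) (ht : 0 ≤ t) (hu : 0 ≤ u) (h : u = 0 → t = 0) :
    (t - u) / Real.log 2 ≤ t * Real.logb 2 (t / u) := by
  rcases hu.eq_or_lt with h0 | hu
  · have ht0 : t = 0 := h h0.symm
    simp [ht0, ← h0]
  · have := helper16 t u 1 ht hu one_pos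
    simpa using this

/-- Approximation step removing the strict positivity constraint: any joint pmf `PXY` on
`𝒳 × 𝒴` with `𝒴`-marginal `PY` can be approximated by a strictly positive joint pmf `Q` with
the same `𝒴`-marginal, whose mutual information exceeds that of `PXY` by at most
`α · log₂ |𝒳|` and whose expected distortion exceeds that of `PXY` by at most `α · dmax`. -/
theorem stmt_16 {𝒳 𝒴 : Type*} [Fintype 𝒳] [Fintype 𝒴]
    (PY : 𝒴 → ℝ) (hPYpos : ∀ y, 0 < PY y) (hPY1 : ∑ y, PY y = 1)
    (dmax : ℝ) (d : 𝒳 × 𝒴 → ℝ) (hd : ∀ p, d p ∈ Set.Icc 0 dmax)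
    (PXY : 𝒳 × 𝒴 → ℝ) (hP0 : ∀ p, 0 ≤ PXY p) (hP1 : ∑ p : 𝒳 × 𝒴, PXY p = 1)
    (hPmarg : ∀ y, ∑ x, PXY (x, y) = PY y)
    (α : ℝ) (hα : α ∈ Set.Ioo (0 : ℝ) 1) :
    ∃ Q : 𝒳 × 𝒴 → ℝ,
      (∀ p, 0 < Q p) ∧ (∑ p : 𝒳 × 𝒴, Q p = 1) ∧ (∀ y, ∑ x, Q (x, y) = PY y) ∧
      ((∑ x, ∑ y, Q (x, y) *
          Real.logb 2 (Q (x, y) / ((∑ y', Q (x, y')) * (∑ x', Q (x', y)))))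
        ≤ (∑ x, ∑ y, PXY (x, y) *
            Real.logb 2 (PXY (x, y) / ((∑ y', PXY (x, y')) * (∑ x', PXY (x', y)))))
          + α * Real.logb 2 (Fintype.card 𝒳)) ∧
      (∑ p : 𝒳 × 𝒴, Q p * d p) ≤ (∑ p : 𝒳 × 𝒴, PXY p * d p) + α * dmax := by
  obtain ⟨hα0, hα1⟩ := hα
  have h1α : 0 < 1 - α := by linarith
  have hXne : Nonempty 𝒳 := by
    by_contra h
    rw [not_nonempty_iff] at h
    simp at hP1
  set N : ℝ := (Fintype.card 𝒳 : ℝ) with hNdef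
  have hN : 0 < N := by
    rw [hNdef]; exact_mod_cast Fintype.card_pos
  have hN1 : 1 ≤ N := by
    rw [hNdef]; exact_mod_cast Nat.one_le_iff_ne_zero.mpr Fintype.card_ne_zero
  set Q : 𝒳 × 𝒴 → ℝ := fun p => (1 - α) * PXY p + α * PY p.2 / N with hQdef
  -- basic facts
  have hQpos : ∀ p, 0 < Q p := by
    intro p
    have h1 : 0 ≤ (1 - α) * PXY p := mul_nonneg h1α.le (hP0 p)
    have h2 : 0 < α * PY p.2 / N := div_pos (mul_pos hα0 (hPYpos p.2)) hN
    rw [hQdef]; dsimp only; linarith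
  have hsum2 : ∑ p : 𝒳 × 𝒴, PY p.2 / N = 1 := by
    rw [Fintype.sum_prod_type]
    have h1 : ∀ x : 𝒳, ∑ y, PY y / N = 1 / N := by
      intro x; rw [← Finset.sum_div, hPY1]
    calc ∑ x : 𝒳, ∑ y, PY y / N = ∑ _x : 𝒳, 1 / N :=
          Finset.sum_congr rfl fun x _ => h1 x
      _ = (Fintype.card 𝒳 : ℝ) * (1 / N) := by
          rw [Finset.sum_const, Finset.card_univ, nsmul_eq_mul]
      _ = 1 := by rw [← hNdef]; field_simp
  have hQsum : ∑ p : 𝒳 × 𝒴, Q p = 1 := by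
    rw [hQdef]
    dsimp only
    rw [Finset.sum_add_distrib, ← Finset.mul_sum, hP1]
    have : ∑ p : 𝒳 × 𝒴, α * PY p.2 / N = α := by
      simp_rw [mul_div_assoc]
      rw [← Finset.mul_sum, hsum2, mul_one]
    rw [this]; ring
  have hQmarg : ∀ y, ∑ x, Q (x, y) = PY y := by
    intro y
    rw [hQdef]
    dsimp only
    rw [Finset.sum_add_distrib, ← Finset.mul_sum, hPmarg y,
      Finset.sum_const, Finset.card_univ, nsmul_eq_mul, ← hNdef]
    field_simp
    ring
  have hQX : ∀ x, ∑ y', Q (x, y') = (1 - α) * (∑ y', PXY (x, y')) + α / N := by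
    intro x
    rw [hQdef]
    dsimp only
    rw [Finset.sum_add_distrib, ← Finset.mul_sum]
    congr 1
    simp_rw [mul_div_assoc]
    rw [← Finset.mul_sum, ← Finset.sum_div, hPY1, mul_one_div]
  refine ⟨Q, hQpos, hQsum, hQmarg, ?_, ?_⟩
  · -- mutual information bound
    have hPXnn : ∀ x, 0 ≤ ∑ y', PXY (x, y') :=
      fun x => Finset.sum_nonneg fun y _ => hP0 _
    have hPle : ∀ x y, PXY (x, y) ≤ ∑ y', PXY (x, y') := by
      intro x y
      exact Finset.single_le_sum (f := fun y' => PXY (x, y')) (fun i _ => hP0 _)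
        (Finset.mem_univ y)
    -- termwise bound
    have hterm : ∀ x y,
        Q (x, y) * Real.logb 2 (Q (x, y) /
          (((1 - α) * (∑ y', PXY (x, y')) + α / N) * PY y))
        ≤ (1 - α) * (PXY (x, y) *
          Real.logb 2 (PXY (x, y) / ((∑ y', PXY (x, y')) * PY y))) := by
      intro x y
      set a := (1 - α) * PXY (x, y) with hadef
      set b := (1 - α) * ((∑ y', PXY (x, y')) * PY y) with hbdef
      set c := α * PY y / N with hcdef
      have hQxy : Q (x, y) = a + c := by rw [hQdef]
      have hden : ((1 - α) * (∑ y', PXY (x, y')) + α / N) * PY y = b + c := by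
        rw [hbdef, hcdef]; ring
      have hcpos : 0 < c := div_pos (mul_pos hα0 (hPYpos y)) hN
      rw [hQxy, hden]
      by_cases hPXx : (∑ y', PXY (x, y')) = 0
      · have hP0xy : PXY (x, y) = 0 := le_antisymm (hPXx ▸ hPle x y) (hP0 _)
        have ha0 : a = 0 := by rw [hadef, hP0xy, mul_zero]
        have hb0 : b = 0 := by rw [hbdef, hPXx, zero_mul, mul_zero]
        rw [ha0, hb0, hP0xy]
        simp [div_self hcpos.ne']
      · have hPXpos : 0 < ∑ y', PXY (x, y') := (hPXnn x).lt_of_ne (Ne.symm hPXx)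
        have hbpos : 0 < b := mul_pos h1α (mul_pos hPXpos (hPYpos y))
        have hann : 0 ≤ a := mul_nonneg h1α.le (hP0 _)
        refine (key16 a b c hann hbpos hcpos).trans_eq ?_
        have hab : a / b = PXY (x, y) / ((∑ y', PXY (x, y')) * PY y) := by
          rw [hadef, hbdef, mul_div_mul_left _ _ h1α.ne']
        rw [hab, hadef]; ring
    -- nonnegativity of I_P
    have hIP : 0 ≤ ∑ x, ∑ y, PXY (x, y) *
        Real.logb 2 (PXY (x, y) / ((∑ y', PXY (x, y')) * PY y)) := by
      have htb : ∀ x y,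
          (PXY (x, y) - (∑ y', PXY (x, y')) * PY y) / Real.log 2
          ≤ PXY (x, y) * Real.logb 2 (PXY (x, y) / ((∑ y', PXY (x, y')) * PY y)) := by
        intro x y
        refine gibbs16 _ _ (hP0 _) (mul_nonneg (hPXnn x) (hPYpos y).le) ?_
        intro h0
        have hx0 : (∑ y', PXY (x, y')) = 0 := by
          rcases mul_eq_zero.mp h0 with h | h
          · exact h
          · exact absurd h (hPYpos y).ne'
        exact le_antisymm (hx0 ▸ hPle x y) (hP0 _)
      have hA : ∑ x, ∑ y, PXY (x, y) = 1 := by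
        rw [← Fintype.sum_prod_type]; exact hP1
      have hB : ∑ x : 𝒳, ∑ y, ((∑ y', PXY (x, y')) * PY y) = 1 := by
        have h1 : ∀ x : 𝒳, ∑ y, ((∑ y', PXY (x, y')) * PY y) = ∑ y', PXY (x, y') := by
          intro x; rw [← Finset.mul_sum, hPY1, mul_one]
        calc ∑ x : 𝒳, ∑ y, ((∑ y', PXY (x, y')) * PY y)
            = ∑ x, ∑ y', PXY (x, y') := Finset.sum_congr rfl fun x _ => h1 x
          _ = 1 := hA
      calc (0 : ℝ) = ((∑ x, ∑ y, PXY (x, y))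
            - ∑ x : 𝒳, ∑ y, ((∑ y', PXY (x, y')) * PY y)) / Real.log 2 := by
            rw [hA, hB]; norm_num
        _ = ∑ x, ∑ y, (PXY (x, y) - (∑ y', PXY (x, y')) * PY y) / Real.log 2 := by
            rw [← Finset.sum_sub_distrib]
            rw [Finset.sum_div]
            refine Finset.sum_congr rfl fun x _ => ?_
            rw [← Finset.sum_sub_distrib, Finset.sum_div]
        _ ≤ _ := Finset.sum_le_sum fun x _ => Finset.sum_le_sum fun y _ => htb x y
    have hlogN : 0 ≤ Real.logb 2 N :=
      Real.logb_nonneg (by norm_num) hN1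
    -- put things together
    simp only [hPmarg, hQmarg, hQX]
    calc ∑ x, ∑ y, Q (x, y) * Real.logb 2 (Q (x, y) /
            (((1 - α) * (∑ y', PXY (x, y')) + α / N) * PY y))
        ≤ ∑ x, ∑ y, (1 - α) * (PXY (x, y) *
            Real.logb 2 (PXY (x, y) / ((∑ y', PXY (x, y')) * PY y))) :=
          Finset.sum_le_sum fun x _ => Finset.sum_le_sum fun y _ => hterm x y
      _ = (1 - α) * ∑ x, ∑ y, PXY (x, y) *
            Real.logb 2 (PXY (x, y) / ((∑ y', PXY (x, y')) * PY y)) := by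
          simp_rw [Finset.mul_sum]
      _ ≤ (∑ x, ∑ y, PXY (x, y) *
            Real.logb 2 (PXY (x, y) / ((∑ y', PXY (x, y')) * PY y)))
          + α * Real.logb 2 N := by
          nlinarith [mul_nonneg hα0.le hIP, mul_nonneg hα0.le hlogN]
  · -- distortion bound
    have hd0 : 0 ≤ ∑ p : 𝒳 × 𝒴, PXY p * d p :=
      Finset.sum_nonneg fun p _ => mul_nonneg (hP0 p) (hd p).1
    have hsplit : ∑ p : 𝒳 × 𝒴, Q p * d p
        = (1 - α) * (∑ p : 𝒳 × 𝒴, PXY p * d p)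
          + ∑ p : 𝒳 × 𝒴, (α * PY p.2 / N) * d p := by
      rw [hQdef]
      dsimp only
      simp_rw [add_mul]
      rw [Finset.sum_add_distrib]
      congr 1
      rw [Finset.mul_sum]
      exact Finset.sum_congr rfl fun p _ => by ring
    have h2 : ∑ p : 𝒳 × 𝒴, (α * PY p.2 / N) * d p ≤ α * dmax := by
      calc ∑ p : 𝒳 × 𝒴, (α * PY p.2 / N) * d p
          ≤ ∑ p : 𝒳 × 𝒴, (α * PY p.2 / N) * dmax :=
            Finset.sum_le_sum fun p _ =>
              mul_le_mul_of_nonneg_left (hd p).2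
                (div_nonneg (mul_nonneg hα0.le (hPYpos p.2).le) hN.le)
        _ = α * dmax := by
            rw [← Finset.sum_mul]
            have : ∑ p : 𝒳 × 𝒴, α * PY p.2 / N = α := by
              simp_rw [mul_div_assoc]
              rw [← Finset.mul_sum, hsum2, mul_one]
            rw [this]
      
    rw [hsplit]
    nlinarith [mul_nonneg hα0.le hd0]
end
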